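/- For every integer n ≥ 1, the matrix S₀ is invertible and ‖S₀⁻¹‖ ≤ n, where ‖·‖ is the matrix norm induced by the ℓ∞ vector norm. -/

import Mathlib

open Matrix

/-- Truncated conversion operator from Chebyshev `T` coefficients to
ultraspherical `C^(1)` coefficients. -/
noncomputable def S0 (n : ℕ) : Matrix (Fin n) (Fin n) ℝ :=
  Matrix.of fun i j =>
    if (j : ℕ) = (i : ℕ) then (if (i : ℕ) = 0 then 1 else 1 / 2)
    else if (j : ℕ) = (i : ℕ) + 2 then -(1 / 2) else 0

/-- The matrix norm induced by the `ℓ∞` vector norm: the maximum absolute row sum. -/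
noncomputable def matNorm {ι κ : Type*} [Fintype ι] [Fintype κ] (A : Matrix ι κ ℝ) : ℝ :=
  ⨆ i, ∑ j, |A i j|

/-- Entries of the explicit inverse of `S0`, as natural numbers. -/
def bN (i j : ℕ) : ℕ :=
  if j % 2 = i % 2 ∧ i ≤ j then (if i = 0 then 1 else 2) else 0

/-- The explicit inverse of `S0`. -/
noncomputable def Binv (n : ℕ) : Matrix (Fin n) (Fin n) ℝ :=
  Matrix.of fun i j => ((bN (i : ℕ) (j : ℕ) : ℝ))

lemma sum_bN (i : ℕ) : ∀ n : ℕ,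
    ∑ j ∈ Finset.range n, bN i j =
      if i = 0 then (n + 1) / 2 else 2 * ((n - i + 1) / 2) := by
  intro n
  induction n with
  | zero => rw [Finset.sum_range_zero]; split_ifs <;> omega
  | succ n ih =>
      rw [Finset.sum_range_succ, ih]
      unfold bN
      split_ifs <;> omega

lemma key (n i k : ℕ) (hi : i < n) (hk : k < n) :
    (if i = 0 then (1:ℝ) else 1/2) * (bN i k : ℝ) +
      (if i + 2 < n then -(1/2) * (bN (i+2) k : ℝ) else 0) =
      if i = k then 1 else 0 := by
  unfold bN
  split_ifs <;> push_cast <;> first | contradiction | omega | norm_num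

lemma S0_mul_Binv (n : ℕ) : S0 n * Binv n = 1 := by
  ext i k
  rw [Matrix.mul_apply]
  have hsummand : ∀ j : Fin n, S0 n i j * Binv n j k =
      (if (j : ℕ) = (i : ℕ) then (if (i : ℕ) = 0 then (1:ℝ) else 1/2) * (bN (j : ℕ) (k : ℕ) : ℝ) else 0) +
      (if (j : ℕ) = (i : ℕ) + 2 then -(1/2) * (bN (j : ℕ) (k : ℕ) : ℝ) else 0) := by
    intro j
    simp only [S0, Binv, Matrix.of_apply]
    split_ifs <;> first | (exfalso; omega) | ring
  simp only [hsummand]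
  rw [Finset.sum_add_distrib]
  have h1 : ∑ j : Fin n, (if (j : ℕ) = (i : ℕ) then (if (i : ℕ) = 0 then (1:ℝ) else 1/2) * (bN (j : ℕ) (k : ℕ) : ℝ) else 0)
      = (if (i : ℕ) = 0 then (1:ℝ) else 1/2) * (bN (i : ℕ) (k : ℕ) : ℝ) := by
    rw [Fin.sum_univ_eq_sum_range (fun j => (if j = (i : ℕ) then (if (i : ℕ) = 0 then (1:ℝ) else 1/2) * (bN j (k : ℕ) : ℝ) else 0))]
    rw [Finset.sum_ite_eq' (Finset.range n) (i : ℕ)]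
    simp [i.isLt]
  have h2 : ∑ j : Fin n, (if (j : ℕ) = (i : ℕ) + 2 then -(1/2) * (bN (j : ℕ) (k : ℕ) : ℝ) else 0)
      = (if (i : ℕ) + 2 < n then -(1/2) * (bN ((i : ℕ) + 2) (k : ℕ) : ℝ) else 0) := by
    rw [Fin.sum_univ_eq_sum_range (fun j => (if j = (i : ℕ) + 2 then -(1/2) * (bN j (k : ℕ) : ℝ) else 0))]
    rw [Finset.sum_ite_eq' (Finset.range n) ((i : ℕ) + 2)]
    simp [Finset.mem_range]
  rw [h1, h2, key n (i : ℕ) (k : ℕ) i.isLt k.isLt]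
  rw [Matrix.one_apply]
  by_cases h : i = k
  · simp [h]
  · have : (i : ℕ) ≠ (k : ℕ) := fun hc => h (Fin.ext hc)
    simp [h, this]

theorem stmt5 (n : ℕ) (hn : 1 ≤ n) :
    IsUnit (S0 n) ∧ matNorm ((S0 n)⁻¹) ≤ (n : ℝ) := by
  have hmul := S0_mul_Binv n
  have hdet : (S0 n).det * (Binv n).det = 1 := by
    rw [← Matrix.det_mul, hmul, Matrix.det_one]
  refine ⟨(Matrix.isUnit_iff_isUnit_det _).mpr (IsUnit.of_mul_eq_one _ hdet), ?_⟩
  rw [Matrix.inv_eq_right_inv hmul]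
  have hne : Nonempty (Fin n) := ⟨⟨0, hn⟩⟩
  apply ciSup_le
  intro i
  have hrow : ∑ j : Fin n, |Binv n i j| = ((∑ j ∈ Finset.range n, bN (i : ℕ) j : ℕ) : ℝ) := by
    push_cast
    rw [← Fin.sum_univ_eq_sum_range (fun j => (bN (i : ℕ) j : ℝ))]
    refine Finset.sum_congr rfl fun j _ => ?_
    simp [Binv, Nat.abs_cast]
  rw [hrow]
  have hbound : ∑ j ∈ Finset.range n, bN (i : ℕ) j ≤ n := by
    rw [sum_bN]
    split_ifs <;> omega
  exact_mod_cast hbound
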